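/- Fix a realization of the noisy attributes and let f : X → {0,1} be a classifier. Suppose μ_0, μ_1, μ̂_0, μ̂_1 > 0, Pr[f=1, Ẑ=0] > 0, Pr[f=1, Ẑ=1] > 0, and Pr_D[f=1, Z=1] > 0, and suppose: (1) Pr[f=1 | Ẑ=0] ≤ Pr[f=1 | Ẑ=1]; (2) Pr[f=1, Z=0 | Ẑ=0] ≤ α_0·Pr[f=1, Z=1 | Ẑ=0] for some α_0 ∈ [0,1]; (3) Pr[f=1, Z=0 | Ẑ=1] ≤ α_1·Pr[f=1, Z=1 | Ẑ=1] for some α_1 ∈ [0,1]. With β_{ij} := μ̂_i/μ_j, the following chain of inequalities holds: γ(f,S) ≤ (α_0·(1+α_1)·β_{00}·γ(f,Ŝ) + α_1·(1+α_0)·β_{10}) / ((1+α_1)·β_{01}·γ(f,Ŝ) + (1+α_0)·β_{11}) ≤ max{α_0, α_1}·μ_1/μ_0. -/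

import Mathlib

open scoped Classical

noncomputable section

/-- Empirical frequency of a predicate over `N` samples. -/
def empFreq (N : ℕ) (P : Fin N → Prop) : ℝ :=
  ((Finset.univ.filter P).card : ℝ) / N

/-- Probability, over independent flipping noise with rates `η0, η1`, of an event on the
noisy binary protected attributes. -/
def noiseProb (N : ℕ) (z : Fin N → Bool) (η0 η1 : ℝ)
    (E : (Fin N → Bool) → Prop) : ℝ :=
  ∑ zh : Fin N → Bool,
    if E zh then
      ∏ a, (if zh a = z a then 1 - cond (z a) η1 η0 else cond (z a) η1 η0)
    else 0

/-- `Pr[f = 1, Z' = i]` for the attribute assignment `z'` (true or noisy). -/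
def prJoint {X : Type} (N : ℕ) (x : Fin N → X) (f : X → Bool)
    (z' : Fin N → Bool) (i : Bool) : ℝ :=
  empFreq N (fun a => f (x a) = true ∧ z' a = i)

/-- `Pr[Z' = i]` for the attribute assignment `z'`. -/
def muOf (N : ℕ) (z' : Fin N → Bool) (i : Bool) : ℝ :=
  empFreq N (fun a => z' a = i)

/-- `Pr[f = 1 ∣ Z' = i]`. -/
def rate {X : Type} (N : ℕ) (x : Fin N → X) (f : X → Bool)
    (z' : Fin N → Bool) (i : Bool) : ℝ :=
  prJoint N x f z' i / muOf N z' i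

/-- Statistical rate `γ(f, ·)` with respect to attribute assignment `z'`. -/
def gammaSR {X : Type} (N : ℕ) (x : Fin N → X) (f : X → Bool)
    (z' : Fin N → Bool) : ℝ :=
  min (rate N x f z' false) (rate N x f z' true) /
    max (rate N x f z' false) (rate N x f z' true)

/-- Denoised rate `Γ_0(f)`. -/
def Gamma0 {X : Type} (N : ℕ) (x : Fin N → X) (η0 η1 : ℝ) (f : X → Bool)
    (zh : Fin N → Bool) : ℝ :=
  ((1 - η1) * prJoint N x f zh false - η1 * prJoint N x f zh true) /
    ((1 - η1) * muOf N zh false - η1 * muOf N zh true)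

/-- Denoised rate `Γ_1(f)`. -/
def Gamma1 {X : Type} (N : ℕ) (x : Fin N → X) (η0 η1 : ℝ) (f : X → Bool)
    (zh : Fin N → Bool) : ℝ :=
  ((1 - η0) * prJoint N x f zh true - η0 * prJoint N x f zh false) /
    ((1 - η0) * muOf N zh true - η0 * muOf N zh false)

/-- Denoised statistical rate `γ^Δ(f, Ŝ)`. -/
def gammaDelta {X : Type} (N : ℕ) (x : Fin N → X) (η0 η1 : ℝ) (f : X → Bool)
    (zh : Fin N → Bool) : ℝ :=
  min (Gamma0 N x η0 η1 f zh / Gamma1 N x η0 η1 f zh)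
    (Gamma1 N x η0 η1 f zh / Gamma0 N x η0 η1 f zh)

/-- Conditional empirical probability `Pr[f = 1, Z = j ∣ Ẑ = i]`. -/
def condJoint {X : Type} (N : ℕ) (x : Fin N → X) (f : X → Bool)
    (z zh : Fin N → Bool) (j i : Bool) : ℝ :=
  empFreq N (fun a => f (x a) = true ∧ z a = j ∧ zh a = i) / muOf N zh i


lemma empFreq_nonneg' (N : ℕ) (P : Fin N → Prop) : 0 ≤ empFreq N P :=
  div_nonneg (Nat.cast_nonneg _) (Nat.cast_nonneg _)

lemma empFreq_congr' {N : ℕ} {P Q : Fin N → Prop} (h : ∀ a, P a ↔ Q a) :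
    empFreq N P = empFreq N Q := by
  have : P = Q := funext fun a => propext (h a)
  rw [this]

lemma empFreq_split' (N : ℕ) (P : Fin N → Prop) (g : Fin N → Bool) :
    empFreq N P =
      empFreq N (fun a => P a ∧ g a = false) + empFreq N (fun a => P a ∧ g a = true) := by
  unfold empFreq
  rw [← add_div]
  congr 1
  rw [Finset.card_filter, Finset.card_filter, Finset.card_filter]
  push_cast
  rw [← Finset.sum_add_distrib]
  refine Finset.sum_congr rfl ?_
  intro a _
  by_cases hP : P a <;> cases hg : g a <;> simp [hP, hg]

lemma key_poly' (α0 α1 e0 e1 c10 c11 : ℝ)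
    (ha0 : 0 ≤ α0) (ha0' : α0 ≤ 1) (ha1 : 0 ≤ α1) (ha1' : α1 ≤ 1)
    (he0 : 0 ≤ e0) (he1 : 0 ≤ e1) (hc10 : 0 ≤ c10) (hc11 : 0 ≤ c11)
    (h2 : e0 ≤ α0 * c10) (h3 : e1 ≤ α1 * c11) :
    (e0 + e1) * ((1 + α1) * (e0 + c10) + (1 + α0) * (e1 + c11)) ≤
      (α0 * (1 + α1) * (e0 + c10) + α1 * (1 + α0) * (e1 + c11)) * (c10 + c11) := by
  have hs : 0 ≤ α0 * c10 - e0 := by linarith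
  have ht : 0 ≤ α1 * c11 - e1 := by linarith
  have hb1 : 0 ≤ (1 + α0) * e1 + c11 * (1 + α1 * (1 + α1 - α0)) := by
    have h1 : 0 ≤ α1 * (1 + α1 - α0) := mul_nonneg ha1 (by linarith)
    have h2 : 0 ≤ c11 * (1 + α1 * (1 + α1 - α0)) := mul_nonneg hc11 (by linarith)
    nlinarith
  have hb2 : 0 ≤ (1 + α1) * e0 + c10 * (1 + α0 * (1 + α0 - α1)) := by
    have h1 : 0 ≤ α0 * (1 + α0 - α1) := mul_nonneg ha0 (by linarith)
    have h2 : 0 ≤ c10 * (1 + α0 * (1 + α0 - α1)) := mul_nonneg hc10 (by linarith)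
    nlinarith
  nlinarith [mul_nonneg hs (by nlinarith : (0:ℝ) ≤ (1 + α1) * (e0 + c10)),
    mul_nonneg ht (by nlinarith : (0:ℝ) ≤ (1 + α0) * (e1 + c11)),
    mul_nonneg hs hb1, mul_nonneg ht hb2]

set_option maxHeartbeats 1000000 in
/-- Upper bound on the underlying statistical rate `γ(f,S)` in terms of the
noisy statistical rate `γ(f,Ŝ)` for a fixed realization of the noisy attributes. -/
theorem stmt_13 {X : Type} (N : ℕ) (hN : 1 ≤ N)
    (x : Fin N → X) (z : Fin N → Bool) (y : Fin N → Bool) (zh : Fin N → Bool)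
    (f : X → Bool)
    (hμ0 : 0 < muOf N z false) (hμ1 : 0 < muOf N z true)
    (hμh0 : 0 < muOf N zh false) (hμh1 : 0 < muOf N zh true)
    (hp0 : 0 < prJoint N x f zh false) (hp1 : 0 < prJoint N x f zh true)
    (hpz1 : 0 < prJoint N x f z true)
    (α0 α1 : ℝ) (hα0 : 0 ≤ α0 ∧ α0 ≤ 1) (hα1 : 0 ≤ α1 ∧ α1 ≤ 1)
    (h1 : rate N x f zh false ≤ rate N x f zh true)
    (h2 : condJoint N x f z zh false false ≤ α0 * condJoint N x f z zh true false)
    (h3 : condJoint N x f z zh false true ≤ α1 * condJoint N x f z zh true true) :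
    gammaSR N x f z ≤
      (α0 * (1 + α1) * (muOf N zh false / muOf N z false) * gammaSR N x f zh +
          α1 * (1 + α0) * (muOf N zh true / muOf N z false)) /
        ((1 + α1) * (muOf N zh false / muOf N z true) * gammaSR N x f zh +
          (1 + α0) * (muOf N zh true / muOf N z true)) ∧
    (α0 * (1 + α1) * (muOf N zh false / muOf N z false) * gammaSR N x f zh +
          α1 * (1 + α0) * (muOf N zh true / muOf N z false)) /
        ((1 + α1) * (muOf N zh false / muOf N z true) * gammaSR N x f zh +
          (1 + α0) * (muOf N zh true / muOf N z true)) ≤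
      max α0 α1 * (muOf N z true / muOf N z false) := by
  
  obtain ⟨ha0, ha0'⟩ := hα0
  obtain ⟨ha1, ha1'⟩ := hα1
  set P0 := prJoint N x f zh false with hP0d
  set P1 := prJoint N x f zh true with hP1d
  set q0 := prJoint N x f z false with hq0d
  set q1 := prJoint N x f z true with hq1d
  set m0 := muOf N z false with hm0d
  set m1 := muOf N z true with hm1d
  set n0 := muOf N zh false with hn0d
  set n1 := muOf N zh true with hn1d
  set e0 := empFreq N (fun a => f (x a) = true ∧ z a = false ∧ zh a = false) with he0d
  set e1 := empFreq N (fun a => f (x a) = true ∧ z a = false ∧ zh a = true) with he1d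
  set c10 := empFreq N (fun a => f (x a) = true ∧ z a = true ∧ zh a = false) with hc10d
  set c11 := empFreq N (fun a => f (x a) = true ∧ z a = true ∧ zh a = true) with hc11d
  have he0n : 0 ≤ e0 := by rw [he0d]; exact empFreq_nonneg' _ _
  have he1n : 0 ≤ e1 := by rw [he1d]; exact empFreq_nonneg' _ _
  have hc10n : 0 ≤ c10 := by rw [hc10d]; exact empFreq_nonneg' _ _
  have hc11n : 0 ≤ c11 := by rw [hc11d]; exact empFreq_nonneg' _ _
  have hq0n : 0 ≤ q0 := by
    rw [hq0d]; unfold prJoint; exact empFreq_nonneg' _ _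
  -- splitting identities
  have hq0e : q0 = e0 + e1 := by
    rw [hq0d, he0d, he1d]; unfold prJoint
    rw [empFreq_split' N _ zh]
    congr 1
    · exact empFreq_congr' (fun a => by tauto)
    · exact empFreq_congr' (fun a => by tauto)
  have hq1e : q1 = c10 + c11 := by
    rw [hq1d, hc10d, hc11d]; unfold prJoint
    rw [empFreq_split' N _ zh]
    congr 1
    · exact empFreq_congr' (fun a => by tauto)
    · exact empFreq_congr' (fun a => by tauto)
  have hP0e : P0 = e0 + c10 := by
    rw [hP0d, he0d, hc10d]; unfold prJoint
    rw [empFreq_split' N _ z]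
    congr 1
    · exact empFreq_congr' (fun a => by tauto)
    · exact empFreq_congr' (fun a => by tauto)
  have hP1e : P1 = e1 + c11 := by
    rw [hP1d, he1d, hc11d]; unfold prJoint
    rw [empFreq_split' N _ z]
    congr 1
    · exact empFreq_congr' (fun a => by tauto)
    · exact empFreq_congr' (fun a => by tauto)
  -- conditional hypotheses as count inequalities
  have h2' : e0 ≤ α0 * c10 := by
    have h := h2
    unfold condJoint at h
    rw [← he0d, ← hc10d, ← hn0d, ← mul_div_assoc] at h
    exact (div_le_div_iff_of_pos_right hμh0).mp h
  have h3' : e1 ≤ α1 * c11 := by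
    have h := h3
    unfold condJoint at h
    rw [← he1d, ← hc11d, ← hn1d, ← mul_div_assoc] at h
    exact (div_le_div_iff_of_pos_right hμh1).mp h
  -- noisy gamma
  have hγh : gammaSR N x f zh = P0 * n1 / (P1 * n0) := by
    unfold gammaSR
    rw [min_eq_left h1, max_eq_right h1]
    unfold rate
    rw [← hP0d, ← hP1d, ← hn0d, ← hn1d]
    field_simp
  set Knum := α0 * (1 + α1) * P0 + α1 * (1 + α0) * P1 with hKd
  set Kden := (1 + α1) * P0 + (1 + α0) * P1 with hKdd
  have hKdenpos : 0 < Kden := by rw [hKdd]; nlinarith [hp0, hp1]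
  rw [hγh]
  have hc : (n1 : ℝ) / P1 ≠ 0 := (div_pos hμh1 hp1).ne'
  have hA' : α0 * (1 + α1) * (n0 / m0) * (P0 * n1 / (P1 * n0)) + α1 * (1 + α0) * (n1 / m0)
      = n1 / P1 * (Knum / m0) := by
    rw [hKd]
    field_simp
  have hB' : (1 + α1) * (n0 / m1) * (P0 * n1 / (P1 * n0)) + (1 + α0) * (n1 / m1)
      = n1 / P1 * (Kden / m1) := by
    rw [hKdd]
    field_simp
  rw [hA', hB', mul_div_mul_left _ _ hc]
  constructor
  · have hmm : gammaSR N x f z ≤ q0 / m0 / (q1 / m1) := by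
      unfold gammaSR rate
      rw [← hq0d, ← hq1d, ← hm0d, ← hm1d]
      exact div_le_div₀ (div_nonneg hq0n hμ0.le) (min_le_left _ _)
        (div_pos hpz1 hμ1) (le_max_right _ _)
    refine hmm.trans ?_
    rw [div_le_div_iff₀ (div_pos hpz1 hμ1) (div_pos hKdenpos hμ1)]
    have key' : q0 * Kden ≤ Knum * q1 := by
      rw [hq0e, hq1e, hKd, hKdd, hP0e, hP1e]
      exact key_poly' α0 α1 e0 e1 c10 c11 ha0 ha0' ha1 ha1' he0n he1n hc10n hc11n h2' h3'
    calc q0 / m0 * (Kden / m1) = q0 * Kden / (m0 * m1) := by rw [div_mul_div_comm]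
      _ ≤ Knum * q1 / (m0 * m1) := by
          exact (div_le_div_iff_of_pos_right (mul_pos hμ0 hμ1)).mpr key'
      _ = Knum / m0 * (q1 / m1) := by rw [div_mul_div_comm]
  · have hKle : Knum ≤ max α0 α1 * Kden := by
      rw [hKd, hKdd]
      have t1 : α0 * ((1 + α1) * P0) ≤ max α0 α1 * ((1 + α1) * P0) :=
        mul_le_mul_of_nonneg_right (le_max_left α0 α1)
          (mul_nonneg (by linarith) hp0.le)
      have t2 : α1 * ((1 + α0) * P1) ≤ max α0 α1 * ((1 + α0) * P1) :=
        mul_le_mul_of_nonneg_right (le_max_right α0 α1)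
          (mul_nonneg (by linarith) hp1.le)
      linarith
    have hstep : Knum / m0 / (Kden / m1) = m1 * Knum / (m0 * Kden) := by
      field_simp [hμ0.ne', hμ1.ne', hKdenpos.ne']
    rw [hstep, div_le_iff₀ (mul_pos hμ0 hKdenpos)]
    have hrw : max α0 α1 * (m1 / m0) * (m0 * Kden) = max α0 α1 * Kden * m1 := by
      field_simp
    rw [hrw]
    nlinarith [mul_le_mul_of_nonneg_right hKle hμ1.le]
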